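/- Let d, m ≥ 1, let 0 < α₁ ≤ α₂ ≤ … ≤ α_m ≤ 1 be reals, and let f = (f₁, …, f_m) : [0,1]^d → ℝ^m satisfy |f_i(x) - f_i(y)| ≤ c ‖x - y‖^{α_i} for all x, y ∈ [0,1]^d and some c > 0. Then the Hausdorff dimension of the graph Gr f([0,1]^d) = { (x, f(x)) : x ∈ [0,1]^d } ⊂ ℝ^{d+m} is at most min{ (d + Σ_{i=1}^j (α_j - α_i)) / α_j (1 ≤ j ≤ m), d + Σ_{i=1}^m (1 - α_i) }. -/

import Mathlib

open MeasureTheory EMetric Filter ENNReal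

set_option maxHeartbeats 1000000

lemma abs_sub_le_of_mem_Icc' {a b x y : ℝ} (hx : x ∈ Set.Icc a b) (hy : y ∈ Set.Icc a b) :
    |x - y| ≤ b - a :=
  abs_sub_le_iff.2 ⟨by linarith [hx.1, hx.2, hy.1, hy.2], by linarith [hx.1, hx.2, hy.1, hy.2]⟩

lemma euclid_dist_le {k : ℕ} (x y : EuclideanSpace ℝ (Fin k)) {δ : ℝ} (hδ : 0 ≤ δ)
    (h : ∀ i, |x i - y i| ≤ δ) : dist x y ≤ Real.sqrt k * δ := by
  rw [EuclideanSpace.dist_eq]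
  have h1 : ∀ i : Fin k, dist (x i) (y i) ^ 2 ≤ δ ^ 2 := fun i => by
    rw [Real.dist_eq]; exact pow_le_pow_left₀ (abs_nonneg _) (h i) 2
  calc Real.sqrt (∑ i, dist (x i) (y i) ^ 2) ≤ Real.sqrt (∑ _i : Fin k, δ ^ 2) :=
        Real.sqrt_le_sqrt (Finset.sum_le_sum fun i _ => h1 i)
    _ = Real.sqrt ((k : ℝ) * δ ^ 2) := by
        rw [Finset.sum_const, Finset.card_univ, Fintype.card_fin, nsmul_eq_mul]
    _ = Real.sqrt k * δ := by
        rw [Real.sqrt_mul (Nat.cast_nonneg k), Real.sqrt_sq hδ]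

lemma graph_dimH_le (d m : ℕ) (hd : 1 ≤ d) (hm : 1 ≤ m)
    (α : Fin m → ℝ) (hαpos : ∀ i, 0 < α i) (hα1 : ∀ i, α i ≤ 1)
    (f : EuclideanSpace ℝ (Fin d) → EuclideanSpace ℝ (Fin m)) (c : ℝ) (hc : 0 < c)
    (K : Set (EuclideanSpace ℝ (Fin d)))
    (hK : K = {x | ∀ i, x i ∈ Set.Icc (0:ℝ) 1})
    (hf : ∀ i, ∀ x ∈ K, ∀ y ∈ K, |f x i - f y i| ≤ c * ‖x - y‖ ^ (α i))
    (β : ℝ) (hβ0 : 0 < β) (hβ1 : β ≤ 1) :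
    dimH ((fun x => (x, f x)) '' K) ≤
      ENNReal.ofReal ((d : ℝ) / β + ∑ i, max 0 (1 - α i / β)) := by
  set G := (fun x => (x, f x)) '' K with hG
  set B : ℝ := (d : ℝ) / β + ∑ i, max 0 (1 - α i / β) with hB
  have hB0 : 0 ≤ B := by
    apply add_nonneg (div_nonneg (Nat.cast_nonneg d) hβ0.le)
    exact Finset.sum_nonneg fun i _ => le_max_left _ _
  -- basic quantities
  set ε : ℕ → ℝ := fun n => ((n : ℝ) + 1)⁻¹ with hεdef
  have hε0 : ∀ n, 0 < ε n := fun n => by positivity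
  have hε1 : ∀ n, ε n ≤ 1 := fun n => by
    rw [hεdef]; simp only []
    rw [inv_le_one_iff₀]; right; linarith [Nat.cast_nonneg (α := ℝ) n]
  set N : ℕ → ℕ := fun n => ⌈(ε n) ^ (-(1 / β))⌉₊ with hNdef
  set M : ℕ → Fin m → ℕ := fun n i => ⌈2 * c * Real.sqrt d * (ε n) ^ (α i / β - 1)⌉₊ with hMdef
  set R : ℕ → Fin m → ℝ := fun n i => c * Real.sqrt d * (ε n) ^ (α i / β) with hRdef
  have hsd1 : (1 : ℝ) ≤ Real.sqrt d := by
    rw [show (1:ℝ) = Real.sqrt 1 by simp]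
    exact Real.sqrt_le_sqrt (by exact_mod_cast hd)
  have hsdd : Real.sqrt d ≤ d := by
    rw [Real.sqrt_le_left (Nat.cast_nonneg d)]
    nlinarith [show (1:ℝ) ≤ d from by exact_mod_cast hd]
  have hN1 : ∀ n, 1 ≤ N n := fun n =>
    Nat.one_le_iff_ne_zero.2 (Nat.ceil_pos.2 (Real.rpow_pos_of_pos (hε0 n) _)).ne'
  have hNpos : ∀ n, (0:ℝ) < N n := fun n => by exact_mod_cast hN1 n
  have hNinv : ∀ n, ((N n : ℝ))⁻¹ ≤ (ε n) ^ (1 / β) := by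
    intro n
    have h1 : (ε n) ^ (-(1 / β)) ≤ N n := Nat.le_ceil _
    rw [Real.rpow_neg (hε0 n).le] at h1
    have h2 : (0:ℝ) < (ε n) ^ (1 / β) := Real.rpow_pos_of_pos (hε0 n) _
    calc ((N n : ℝ))⁻¹ ≤ (((ε n) ^ (1 / β))⁻¹)⁻¹ := by
          apply inv_anti₀ (by positivity) h1
      _ = (ε n) ^ (1 / β) := inv_inv _
  have hεβ : ∀ n, (ε n) ^ (1 / β) ≤ ε n := by
    intro n
    have := Real.rpow_le_rpow_of_exponent_ge (hε0 n) (hε1 n)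
      (one_le_one_div hβ0 hβ1)
    rwa [Real.rpow_one] at this
  have hM1 : ∀ n i, 1 ≤ M n i := fun n i =>
    Nat.one_le_iff_ne_zero.2 (Nat.ceil_pos.2 (by positivity)).ne'
  have hMge : ∀ n i, 2 * c * Real.sqrt d * (ε n) ^ (α i / β - 1) ≤ M n i :=
    fun n i => Nat.le_ceil _
  have h2R : ∀ n i, 2 * R n i ≤ (M n i : ℝ) * ε n := by
    intro n i
    have he : (ε n) ^ (α i / β) = (ε n) ^ (α i / β - 1) * ε n := by
      rw [← Real.rpow_add_one (hε0 n).ne' (α i / β - 1)]; ring_nf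
    calc 2 * R n i = (2 * c * Real.sqrt d * (ε n) ^ (α i / β - 1)) * ε n := by
          rw [hRdef]; simp only []; rw [he]; ring
      _ ≤ (M n i : ℝ) * ε n := by
          apply mul_le_mul_of_nonneg_right (hMge n i) (hε0 n).le
  -- the pieces of the cover
  set p : ℕ → (Fin d → ℕ) → EuclideanSpace ℝ (Fin d) :=
    fun n k => WithLp.toLp 2 (fun a => (k a : ℝ) / (N n)) with hpdef
  set t : ∀ n : ℕ, ((Fin d → Fin (N n)) × (∀ i, Fin (M n i))) →
      Set (EuclideanSpace ℝ (Fin d) × EuclideanSpace ℝ (Fin m)) :=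
    fun n kl =>
      {z | (∀ a, z.1 a ∈ Set.Icc ((kl.1 a : ℝ) / (N n)) (((kl.1 a : ℝ) + 1) / (N n))) ∧
           (∀ i, z.2 i ∈ Set.Icc
             (f (p n (fun a => (kl.1 a : ℕ))) i - R n i + (kl.2 i : ℝ) * ε n)
             (f (p n (fun a => (kl.1 a : ℕ))) i - R n i + ((kl.2 i : ℝ) + 1) * ε n))} with htdef
  have hsmm : Real.sqrt m ≤ m := by
    rw [Real.sqrt_le_left (Nat.cast_nonneg m)]
    nlinarith [show (1:ℝ) ≤ m from by exact_mod_cast hm]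
  have hdiam : ∀ n kl, EMetric.diam (t n kl) ≤ ENNReal.ofReal (((d : ℝ) + m) * ε n) := by
    rintro n ⟨k, l⟩
    apply EMetric.diam_le
    rintro ⟨z1, z2⟩ hz ⟨w1, w2⟩ hw
    simp only [htdef, Set.mem_setOf_eq] at hz hw
    obtain ⟨hz1, hz2⟩ := hz
    obtain ⟨hw1, hw2⟩ := hw
    rw [Prod.edist_eq]
    apply max_le <;> rw [edist_dist] <;> apply ENNReal.ofReal_le_ofReal
    · have h1 : dist z1 w1 ≤ Real.sqrt d * (N n : ℝ)⁻¹ := by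
        apply euclid_dist_le _ _ (by positivity)
        intro a
        calc |z1 a - w1 a| ≤ ((k a : ℝ) + 1) / N n - (k a : ℝ) / N n :=
              abs_sub_le_of_mem_Icc' (hz1 a) (hw1 a)
          _ = (N n : ℝ)⁻¹ := by rw [div_sub_div_same]; simp
      calc dist z1 w1 ≤ Real.sqrt d * (N n : ℝ)⁻¹ := h1
        _ ≤ ((d : ℝ) + m) * ε n := by
            apply mul_le_mul (le_trans hsdd (by linarith [Nat.cast_nonneg (α := ℝ) m]))
              (le_trans (hNinv n) (hεβ n)) (by positivity) (by positivity)
    · have h1 : dist z2 w2 ≤ Real.sqrt m * ε n := by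
        apply euclid_dist_le _ _ (hε0 n).le
        intro i
        calc |z2 i - w2 i| ≤ (f (p n (fun a => (k a : ℕ))) i - R n i + ((l i : ℝ) + 1) * ε n)
              - (f (p n (fun a => (k a : ℕ))) i - R n i + (l i : ℝ) * ε n) :=
              abs_sub_le_of_mem_Icc' (hz2 i) (hw2 i)
          _ = ε n := by ring
      calc dist z2 w2 ≤ Real.sqrt m * ε n := h1
        _ ≤ ((d : ℝ) + m) * ε n := mul_le_mul_of_nonneg_right
            (le_trans hsmm (by linarith [Nat.cast_nonneg (α := ℝ) d])) (hε0 n).le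
  have hcover : ∀ n, G ⊆ ⋃ kl, t n kl := by
    intro n
    rintro _ ⟨x, hxK, rfl⟩
    have hx : ∀ a, x a ∈ Set.Icc (0:ℝ) 1 := by rw [hK] at hxK; exact hxK
    -- choose the x-cube
    set k : Fin d → Fin (N n) := fun a =>
      ⟨min ⌊x a * N n⌋₊ (N n - 1), by have := hN1 n; omega⟩ with hkdef
    have hk1 : ∀ a, ((k a : ℕ) : ℝ) / N n ≤ x a := by
      intro a
      rw [div_le_iff₀ (hNpos n)]
      calc ((k a : ℕ) : ℝ) ≤ (⌊x a * N n⌋₊ : ℝ) := by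
            exact_mod_cast Nat.cast_le.2 (min_le_left _ _)
        _ ≤ x a * N n := Nat.floor_le (mul_nonneg (hx a).1 (hNpos n).le)
    have hk2 : ∀ a, x a ≤ (((k a : ℕ) : ℝ) + 1) / N n := by
      intro a
      rw [le_div_iff₀ (hNpos n)]
      rcases le_or_gt ⌊x a * N n⌋₊ (N n - 1) with h | h
      · have hke : (k a : ℕ) = ⌊x a * N n⌋₊ := min_eq_left h
        rw [hke]
        have := Nat.lt_floor_add_one (x a * N n)
        linarith [this]
      · have hke : (k a : ℕ) = N n - 1 := min_eq_right h.le
        rw [hke]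
        have h1 : (((N n - 1 : ℕ) : ℝ) + 1) = (N n : ℝ) := by
          have := hN1 n
          push_cast [Nat.cast_sub this]
          ring
        rw [h1]
        calc x a * N n ≤ 1 * N n := mul_le_mul_of_nonneg_right (hx a).2 (hNpos n).le
          _ = (N n : ℝ) := one_mul _
        -- goal x a * N n ≤ N n * 1? careful with sides
    have hpK : p n (fun a => (k a : ℕ)) ∈ K := by
      rw [hK]
      intro a
      constructor
      · exact div_nonneg (Nat.cast_nonneg _) (hNpos n).le
      · rw [div_le_one (hNpos n)]
        have : (k a : ℕ) ≤ N n := le_trans (min_le_right _ _) (Nat.sub_le _ _)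
        exact_mod_cast this
    have hdist : dist x (p n (fun a => (k a : ℕ))) ≤ Real.sqrt d * (N n : ℝ)⁻¹ := by
      apply euclid_dist_le _ _ (by positivity)
      intro a
      have hpa : p n (fun a => (k a : ℕ)) a = ((k a : ℕ) : ℝ) / N n := rfl
      rw [hpa]
      have heq : (((k a : ℕ) : ℝ) + 1) / N n - ((k a : ℕ) : ℝ) / N n = (N n : ℝ)⁻¹ := by
        rw [div_sub_div_same]; simp
      rw [abs_of_nonneg (by linarith [hk1 a])]
      linarith [hk2 a]
    have hfb : ∀ i, |f x i - f (p n (fun a => (k a : ℕ))) i| ≤ R n i := by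
      intro i
      have h0 : ‖x - p n (fun a => (k a : ℕ))‖ = dist x (p n (fun a => (k a : ℕ))) :=
        (dist_eq_norm _ _).symm
      calc |f x i - f (p n (fun a => (k a : ℕ))) i|
          ≤ c * ‖x - p n (fun a => (k a : ℕ))‖ ^ (α i) := hf i x hxK _ hpK
        _ ≤ c * (Real.sqrt d * (ε n) ^ (1 / β)) ^ (α i) := by
            apply mul_le_mul_of_nonneg_left _ hc.le
            apply Real.rpow_le_rpow (norm_nonneg _) _ (hαpos i).le
            rw [h0]
            exact le_trans hdist (mul_le_mul_of_nonneg_left (hNinv n) (by positivity))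
        _ = c * ((Real.sqrt d) ^ (α i) * ((ε n) ^ (1 / β)) ^ (α i)) := by
            rw [Real.mul_rpow (by positivity) (by positivity)]
        _ ≤ c * (Real.sqrt d * (ε n) ^ (α i / β)) := by
            apply mul_le_mul_of_nonneg_left _ hc.le
            apply mul_le_mul
            · calc (Real.sqrt d) ^ (α i) ≤ (Real.sqrt d) ^ (1:ℝ) :=
                    Real.rpow_le_rpow_of_exponent_le hsd1 (hα1 i)
                _ = Real.sqrt d := Real.rpow_one _
            · rw [← Real.rpow_mul (hε0 n).le]
              apply le_of_eq
              congr 1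
              ring
            · positivity
            · positivity
        _ = R n i := by rw [hRdef]; ring
    -- choose the y-box
    set L : Fin m → ℝ := fun i => f (p n (fun a => (k a : ℕ))) i - R n i with hLdef
    have hfL : ∀ i, 0 ≤ f x i - L i ∧ f x i - L i ≤ 2 * R n i := by
      intro i
      have := abs_le.1 (hfb i)
      constructor <;> [skip; skip] <;> simp only [hLdef] <;> linarith [this.1, this.2]
    set l : ∀ i, Fin (M n i) := fun i =>
      ⟨min ⌊(f x i - L i) / ε n⌋₊ (M n i - 1), by have := hM1 n i; omega⟩ with hldef
    refine Set.mem_iUnion.2 ⟨(k, l), ?_⟩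
    simp only [htdef, Set.mem_setOf_eq]
    refine ⟨fun a => ⟨hk1 a, hk2 a⟩, fun i => ⟨?_, ?_⟩⟩
    · -- lower bound
      have h1 : ((l i : ℕ) : ℝ) ≤ (f x i - L i) / ε n := by
        calc ((l i : ℕ) : ℝ) ≤ (⌊(f x i - L i) / ε n⌋₊ : ℝ) := by
              exact_mod_cast Nat.cast_le.2 (min_le_left _ _)
          _ ≤ (f x i - L i) / ε n := Nat.floor_le (by
              apply div_nonneg (hfL i).1 (hε0 n).le)
      rw [le_div_iff₀ (hε0 n)] at h1
      simp only [hLdef] at h1 ⊢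
      linarith
    · -- upper bound
      rcases le_or_gt ⌊(f x i - L i) / ε n⌋₊ (M n i - 1) with h | h
      · have hle : ((l i : ℕ) : ℕ) = ⌊(f x i - L i) / ε n⌋₊ := min_eq_left h
        have h2 : (f x i - L i) / ε n < ((l i : ℕ) : ℝ) + 1 := by
          rw [hle]
          push_cast
          exact Nat.lt_floor_add_one _
        rw [div_lt_iff₀ (hε0 n)] at h2
        simp only [hLdef] at h2 ⊢
        linarith
      · have hle : ((l i : ℕ) : ℕ) = M n i - 1 := min_eq_right h.le
        have h1 : ((l i : ℕ) : ℝ) + 1 = (M n i : ℝ) := by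
          rw [hle]
          have := hM1 n i
          push_cast [Nat.cast_sub this]
          ring
        have h2 : f x i ≤ L i + 2 * R n i := by linarith [(hfL i).2]
        have h3 := h2R n i
        simp only [hLdef] at h2 ⊢
        rw [h1]
        linarith
  have htend0 : Tendsto ε atTop (nhds (0:ℝ)) := by
    have := tendsto_one_div_add_atTop_nhds_zero_nat (𝕜 := ℝ)
    simpa [hεdef, one_div] using this
  have main : ∀ s : ℝ, B < s → μH[s] G = 0 := by
    intro s hs
    have hs0 : 0 < s := lt_of_le_of_lt hB0 hs
    set C : ℝ := 2 ^ d * (2 * c * Real.sqrt d + 1) ^ m * ((d : ℝ) + m) ^ s with hCdef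
    have hsum : ∀ n, (∑ kl : (Fin d → Fin (N n)) × (∀ i, Fin (M n i)),
        EMetric.diam (t n kl) ^ s) ≤ ENNReal.ofReal (C * (ε n) ^ (s - B)) := by
      intro n
      set A : ℝ := -(1 / β) * (d : ℝ) with hAdef
      set S : ℝ := ∑ i, -(max 0 (1 - α i / β)) with hSdef
      have hNle : (N n : ℝ) ≤ 2 * (ε n) ^ (-(1 / β)) := by
        have hz1 : (1 : ℝ) ≤ (ε n) ^ (-(1 / β)) := by
          rw [show (1:ℝ) = (ε n) ^ (0:ℝ) by rw [Real.rpow_zero]]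
          exact Real.rpow_le_rpow_of_exponent_ge (hε0 n) (hε1 n) (neg_nonpos.2 (by positivity))
        calc (N n : ℝ) ≤ (ε n) ^ (-(1 / β)) + 1 :=
              le_of_lt (Nat.ceil_lt_add_one (by positivity))
          _ ≤ 2 * (ε n) ^ (-(1 / β)) := by linarith
      have hMle : ∀ i, (M n i : ℝ) ≤
          (2 * c * Real.sqrt d + 1) * (ε n) ^ (-(max 0 (1 - α i / β))) := by
        intro i
        have he1 : (ε n) ^ (α i / β - 1) ≤ (ε n) ^ (-(max 0 (1 - α i / β))) :=
          Real.rpow_le_rpow_of_exponent_ge (hε0 n) (hε1 n)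
            (by linarith [le_max_right (0:ℝ) (1 - α i / β)])
        have he2 : (1 : ℝ) ≤ (ε n) ^ (-(max 0 (1 - α i / β))) := by
          rw [show (1:ℝ) = (ε n) ^ (0:ℝ) by rw [Real.rpow_zero]]
          exact Real.rpow_le_rpow_of_exponent_ge (hε0 n) (hε1 n)
            (neg_nonpos.2 (le_max_left _ _))
        have he3 : 2 * c * Real.sqrt d * (ε n) ^ (α i / β - 1) ≤
            2 * c * Real.sqrt d * (ε n) ^ (-(max 0 (1 - α i / β))) :=
          mul_le_mul_of_nonneg_left he1 (by positivity)
        calc (M n i : ℝ) ≤ 2 * c * Real.sqrt d * (ε n) ^ (α i / β - 1) + 1 :=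
              le_of_lt (Nat.ceil_lt_add_one (by positivity))
          _ ≤ 2 * c * Real.sqrt d * (ε n) ^ (-(max 0 (1 - α i / β))) +
              (ε n) ^ (-(max 0 (1 - α i / β))) := by linarith
          _ = (2 * c * Real.sqrt d + 1) * (ε n) ^ (-(max 0 (1 - α i / β))) := by ring
      have h1 : (N n : ℝ) ^ d ≤ 2 ^ d * (ε n) ^ A := by
        calc (N n : ℝ) ^ d ≤ (2 * (ε n) ^ (-(1 / β))) ^ d :=
              pow_le_pow_left₀ (Nat.cast_nonneg _) hNle d
          _ = 2 ^ d * ((ε n) ^ (-(1 / β))) ^ d := mul_pow _ _ _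
          _ = 2 ^ d * (ε n) ^ A := by
              rw [hAdef, ← Real.rpow_natCast ((ε n) ^ (-(1 / β))) d,
                ← Real.rpow_mul (hε0 n).le]
      have h2 : ∏ i, (M n i : ℝ) ≤ (2 * c * Real.sqrt d + 1) ^ m * (ε n) ^ S := by
        calc ∏ i, (M n i : ℝ)
            ≤ ∏ i, ((2 * c * Real.sqrt d + 1) * (ε n) ^ (-(max 0 (1 - α i / β)))) :=
              Finset.prod_le_prod (fun i _ => Nat.cast_nonneg _) (fun i _ => hMle i)
          _ = (2 * c * Real.sqrt d + 1) ^ m * (ε n) ^ S := by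
              rw [Finset.prod_mul_distrib, Finset.prod_const, Finset.card_univ,
                Fintype.card_fin, hSdef, Real.rpow_sum_of_pos (hε0 n)]
      have hcard : (Fintype.card ((Fin d → Fin (N n)) × (∀ i, Fin (M n i))) : ℝ) =
          (N n : ℝ) ^ d * ∏ i, (M n i : ℝ) := by
        rw [Fintype.card_prod, Fintype.card_fun, Fintype.card_pi]
        push_cast
        simp
      have hsplit : (ε n) ^ (s - B) = (ε n) ^ A * ((ε n) ^ S * (ε n) ^ s) := by
        rw [← Real.rpow_add (hε0 n), ← Real.rpow_add (hε0 n)]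
        congr 1
        rw [hB, hAdef, hSdef, Finset.sum_neg_distrib]
        ring
      have hreal : (Fintype.card ((Fin d → Fin (N n)) × (∀ i, Fin (M n i))) : ℝ) *
          (((d : ℝ) + m) * ε n) ^ s ≤ C * (ε n) ^ (s - B) := by
        rw [hcard, Real.mul_rpow (by positivity) (hε0 n).le, hCdef, hsplit]
        calc ((N n : ℝ) ^ d * ∏ i, (M n i : ℝ)) * (((d : ℝ) + m) ^ s * (ε n) ^ s)
            ≤ ((2 ^ d * (ε n) ^ A) * ((2 * c * Real.sqrt d + 1) ^ m * (ε n) ^ S)) *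
              (((d : ℝ) + m) ^ s * (ε n) ^ s) := by
              apply mul_le_mul_of_nonneg_right _ (by positivity)
              apply mul_le_mul h1 h2 (Finset.prod_nonneg fun i _ => Nat.cast_nonneg _)
                (by positivity)
          _ = 2 ^ d * (2 * c * Real.sqrt d + 1) ^ m * ((d : ℝ) + m) ^ s *
              ((ε n) ^ A * ((ε n) ^ S * (ε n) ^ s)) := by ring
      calc (∑ kl : (Fin d → Fin (N n)) × (∀ i, Fin (M n i)), EMetric.diam (t n kl) ^ s)
          ≤ (Finset.univ.card : ℕ) • (ENNReal.ofReal (((d : ℝ) + m) * ε n)) ^ s :=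
            Finset.sum_le_card_nsmul _ _ _
              (fun kl _ => ENNReal.rpow_le_rpow (hdiam n kl) hs0.le)
        _ = (Fintype.card ((Fin d → Fin (N n)) × (∀ i, Fin (M n i))) : ℝ≥0∞) *
            ENNReal.ofReal ((((d : ℝ) + m) * ε n) ^ s) := by
            rw [nsmul_eq_mul, Finset.card_univ,
              ENNReal.ofReal_rpow_of_nonneg (by positivity) hs0.le]
        _ = ENNReal.ofReal ((Fintype.card ((Fin d → Fin (N n)) × (∀ i, Fin (M n i))) : ℝ) *
            (((d : ℝ) + m) * ε n) ^ s) := by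
            rw [ENNReal.ofReal_mul (Nat.cast_nonneg _), ENNReal.ofReal_natCast]
        _ ≤ ENNReal.ofReal (C * (ε n) ^ (s - B)) := ENNReal.ofReal_le_ofReal hreal
    have hr0 : Tendsto (fun n => ENNReal.ofReal (((d : ℝ) + m) * ε n)) atTop (nhds 0) := by
      have h1 : Tendsto (fun n => ((d : ℝ) + m) * ε n) atTop (nhds 0) := by
        simpa using tendsto_const_nhds.mul htend0
      have := ENNReal.tendsto_ofReal h1
      simpa using this
    have hμ := MeasureTheory.Measure.hausdorffMeasure_le_liminf_sum s G
      (fun n => ENNReal.ofReal (((d : ℝ) + m) * ε n)) hr0 t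
      (Eventually.of_forall (fun n => hdiam n)) (Eventually.of_forall hcover)
    refine le_antisymm (le_trans hμ ?_) zero_le
    have hlim0 : Tendsto (fun n => ENNReal.ofReal (C * (ε n) ^ (s - B))) atTop (nhds 0) := by
      have h1 : Tendsto (fun n : ℕ => (ε n) ^ (s - B)) atTop (nhds 0) := by
        have hcont : ContinuousAt (fun x : ℝ => x ^ (s - B)) 0 :=
          Real.continuousAt_rpow_const 0 (s - B) (Or.inr (by linarith))
        have := hcont.tendsto.comp htend0
        simpa [Function.comp_def, Real.zero_rpow (show s - B ≠ 0 by linarith)] using this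
      have h2 : Tendsto (fun n : ℕ => C * (ε n) ^ (s - B)) atTop (nhds 0) := by
        simpa using tendsto_const_nhds.mul h1
      have := ENNReal.tendsto_ofReal h2
      simpa using this
    calc liminf (fun n => ∑ kl : (Fin d → Fin (N n)) × (∀ i, Fin (M n i)),
          EMetric.diam (t n kl) ^ s) atTop
        ≤ liminf (fun n => ENNReal.ofReal (C * (ε n) ^ (s - B))) atTop :=
          liminf_le_liminf (Eventually.of_forall hsum)
      _ = 0 := hlim0.liminf_eq
  apply dimH_le
  intro d' hinf
  by_contra hlt
  push_neg at hlt
  have hd'B : B < (d' : ℝ) := by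
    by_contra hle
    push_neg at hle
    exact absurd (ENNReal.ofReal_le_ofReal hle) (by
      rw [ENNReal.ofReal_coe_nnreal] at *
      exact fun h => absurd h (not_le.2 hlt))
  have := main (d' : ℝ) hd'B
  rw [this] at hinf
  exact ENNReal.zero_ne_top hinf

theorem stmt12 (d m : ℕ) (hd : 1 ≤ d) (hm : 1 ≤ m) [NeZero m]
    (α : Fin m → ℝ) (hαpos : ∀ i, 0 < α i) (hα1 : ∀ i, α i ≤ 1)
    (hαmono : Monotone α)
    (f : EuclideanSpace ℝ (Fin d) → EuclideanSpace ℝ (Fin m)) (c : ℝ) (hc : 0 < c)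
    (K : Set (EuclideanSpace ℝ (Fin d)))
    (hK : K = {x | ∀ i, x i ∈ Set.Icc (0:ℝ) 1})
    (hf : ∀ i, ∀ x ∈ K, ∀ y ∈ K, |f x i - f y i| ≤ c * ‖x - y‖ ^ (α i)) :
    dimH ((fun x => (x, f x)) '' K) ≤ ENNReal.ofReal (min
      (Finset.univ.inf' Finset.univ_nonempty (fun j : Fin m =>
        ((d : ℝ) + ∑ i ∈ Finset.Iic j, (α j - α i)) / α j))
      ((d : ℝ) + ∑ i, (1 - α i))) := by
  obtain ⟨j, -, hj⟩ := Finset.exists_mem_eq_inf' (Finset.univ_nonempty (α := Fin m))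
    (fun j : Fin m => ((d : ℝ) + ∑ i ∈ Finset.Iic j, (α j - α i)) / α j)
  rcases min_cases (Finset.univ.inf' Finset.univ_nonempty (fun j : Fin m =>
      ((d : ℝ) + ∑ i ∈ Finset.Iic j, (α j - α i)) / α j)) ((d : ℝ) + ∑ i, (1 - α i))
    with ⟨hmin, -⟩ | ⟨hmin, -⟩
  · rw [hmin, hj]
    have hsum0 : ∑ i ∈ (Finset.Iic j)ᶜ, max (0:ℝ) (α j - α i) = 0 := by
      apply Finset.sum_eq_zero
      intro i hi
      rw [Finset.mem_compl, Finset.mem_Iic] at hi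
      exact max_eq_left (sub_nonpos.2 (hαmono (le_of_lt (lt_of_not_ge hi))))
    have hsum1 : ∑ i, max (0:ℝ) (α j - α i) = ∑ i ∈ Finset.Iic j, (α j - α i) := by
      rw [← Finset.sum_compl_add_sum (Finset.Iic j), hsum0, zero_add]
      apply Finset.sum_congr rfl
      intro i hi
      exact max_eq_right (sub_nonneg.2 (hαmono (Finset.mem_Iic.1 hi)))
    have heq : ((d : ℝ) + ∑ i ∈ Finset.Iic j, (α j - α i)) / α j
        = (d : ℝ) / α j + ∑ i, max 0 (1 - α i / α j) := by
      have h1 : ∀ i : Fin m, max (0:ℝ) (1 - α i / α j) = max 0 (α j - α i) / α j := by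
        intro i
        rw [show (1:ℝ) - α i / α j = (α j - α i) / α j from by
          rw [sub_div, div_self (hαpos j).ne']]
        rw [show (0:ℝ) = 0 / α j from (zero_div _).symm]
        rw [max_div_div_right (hαpos j).le]
        rw [zero_div]
      simp_rw [h1]
      rw [← Finset.sum_div, hsum1, add_div]
    rw [heq]
    exact graph_dimH_le d m hd hm α hαpos hα1 f c hc K hK hf (α j) (hαpos j) (hα1 j)
  · rw [hmin]
    have heq : (d : ℝ) + ∑ i, (1 - α i) = (d : ℝ) / 1 + ∑ i, max 0 (1 - α i / 1) := by
      rw [div_one]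
      congr 1
      apply Finset.sum_congr rfl
      intro i _
      rw [div_one, max_eq_right (by linarith [hα1 i])]
    rw [heq]
    exact graph_dimH_le d m hd hm α hαpos hα1 f c hc K hK hf 1 one_pos le_rfl
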